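/- Let P be a 3×3 row-stochastic matrix with stationary probability row vector μ, and let Π be a 3×K state-dependent probability matrix of rank 2 with columns φ_k and Λ_k = diag(φ_k). Let φ be a column of Π such that every column of Π is a real linear combination of φ and e = (1,1,1)ᵀ, and set Λ = diag(φ). Then the observed process is reversible if and only if for every r ≥ 1 and all positive integers n_1, …, n_r, μ·Λ·P^{n_1}·Λ·P^{n_2}·Λ·⋯·Λ·P^{n_r}·Λ·e = μ·Λ·P^{n_r}·Λ·⋯·Λ·P^{n_2}·Λ·P^{n_1}·Λ·e. -/

import Mathlib

open Matrix

/-- The matrix product `Λ_{s₀} · P^{n₀} · Λ_{s₁} · ⋯ · P^{n_{r−1}} · Λ_{s_r}`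
appearing in the finite-dimensional distributions of the observed process of a
discrete-time hidden Markov model with 1-step transition probability matrix `P`
and state-dependent probability matrix `E`. -/
def obsProdD (P : Matrix (Fin 3) (Fin 3) ℝ) {K : ℕ}
    (E : Matrix (Fin 3) (Fin K) ℝ) {r : ℕ} (s : Fin (r + 1) → Fin K)
    (n : Fin r → ℕ) : Matrix (Fin 3) (Fin 3) ℝ :=
  Matrix.diagonal (fun a => E a (s 0)) *
    (List.ofFn fun i : Fin r =>
      P ^ n i * Matrix.diagonal fun a => E a (s i.succ)).prod

namespace HMMaux

abbrev Mat3 := Matrix (Fin 3) (Fin 3) ℝ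

def eV : Fin 3 → ℝ := fun _ => 1

lemma diag_mulVec (φ v : Fin 3 → ℝ) : Matrix.diagonal φ *ᵥ v = fun i => φ i * v i := by
  funext i; simp [Matrix.mulVec_diagonal]

/-- single-symbol word vector: `Λ P^{g₁} Λ ⋯ P^{g_m} Λ e`. -/
def wv (Q : Mat3) (φ : Fin 3 → ℝ) (g : List ℕ) : Fin 3 → ℝ :=
  Matrix.diagonal φ *ᵥ ((g.map fun m => Q ^ m * Matrix.diagonal φ).prod *ᵥ eV)

def hval (Q : Mat3) (φ μ : Fin 3 → ℝ) (g : List ℕ) : ℝ := μ ⬝ᵥ wv Q φ g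

lemma wv_nil (Q : Mat3) (φ : Fin 3 → ℝ) : wv Q φ [] = Matrix.diagonal φ *ᵥ eV := by
  simp [wv]

lemma wv_cons (Q : Mat3) (φ : Fin 3 → ℝ) (p : ℕ) (g : List ℕ) :
    wv Q φ (p :: g) = Matrix.diagonal φ *ᵥ (Q ^ p *ᵥ wv Q φ g) := by
  simp only [wv, List.map_cons, List.prod_cons, Matrix.mulVec_mulVec, Matrix.mul_assoc]

abbrev Rep := ℝ × List (ℝ × ℕ × List ℕ)

def tmv (Q : Mat3) (φ : Fin 3 → ℝ) (t : ℝ × ℕ × List ℕ) : Fin 3 → ℝ :=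
  t.1 • (Q ^ t.2.1 *ᵥ wv Q φ t.2.2)

def evalRep (Q : Mat3) (φ : Fin 3 → ℝ) (R : Rep) : Fin 3 → ℝ :=
  R.1 • eV + (R.2.map (tmv Q φ)).sum

def stepRep (n : ℕ) (a b : ℝ) (R : Rep) : Rep :=
  (b * R.1, (a * R.1, n, []) ::
    R.2.flatMap fun t => [(a * t.1, n, t.2.1 :: t.2.2), (b * t.1, n + t.2.1, t.2.2)])

def buildRep : List (ℕ × ℝ × ℝ) → Rep
  | [] => (1, [])
  | x :: t => stepRep x.1 x.2.1 x.2.2 (buildRep t)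

def prodL (Q : Mat3) (φ : Fin 3 → ℝ) (l : List (ℕ × ℝ × ℝ)) : Mat3 :=
  (l.map fun x => Q ^ x.1 * (x.2.1 • Matrix.diagonal φ + x.2.2 • 1)).prod

lemma mulVec_list_sum (M : Mat3) (L : List (Fin 3 → ℝ)) :
    M *ᵥ L.sum = (L.map (M *ᵥ ·)).sum := by
  induction L with
  | nil => simp
  | cons x t ih => simp [Matrix.mulVec_add, ih]

lemma pow_mulVec_eV (Q : Mat3) (hQ : Q *ᵥ eV = eV) (n : ℕ) : Q ^ n *ᵥ eV = eV := by
  induction n with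
  | zero => simp
  | succ k ih => rw [pow_succ', ← Matrix.mulVec_mulVec, ih, hQ]

lemma FmulVec (Q : Mat3) (φ : Fin 3 → ℝ) (n : ℕ) (a b : ℝ) (v : Fin 3 → ℝ) :
    (Q ^ n * (a • Matrix.diagonal φ + b • 1)) *ᵥ v
      = a • (Q ^ n *ᵥ (Matrix.diagonal φ *ᵥ v)) + b • (Q ^ n *ᵥ v) := by
  rw [← Matrix.mulVec_mulVec, Matrix.add_mulVec, Matrix.smul_mulVec,
    Matrix.smul_mulVec, Matrix.one_mulVec, Matrix.mulVec_add]
  rw [Matrix.mulVec_smul, Matrix.mulVec_smul]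

lemma sum_flatMap_pair (f g : (ℝ × ℕ × List ℕ) → (ℝ × ℕ × List ℕ))
    (tm : (ℝ × ℕ × List ℕ) → Fin 3 → ℝ) (L : List (ℝ × ℕ × List ℕ)) :
    ((L.flatMap fun t => [f t, g t]).map tm).sum = (L.map fun t => tm (f t) + tm (g t)).sum := by
  induction L with
  | nil => simp
  | cons x t ih => simp [ih, add_assoc]

lemma sum_part (Q : Mat3) (φ : Fin 3 → ℝ) (n : ℕ) (a b : ℝ) (L : List (ℝ × ℕ × List ℕ)) :
    a • (Q ^ n *ᵥ (Matrix.diagonal φ *ᵥ (L.map (tmv Q φ)).sum))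
      + b • (Q ^ n *ᵥ (L.map (tmv Q φ)).sum)
    = ((L.flatMap fun t => [(a * t.1, n, t.2.1 :: t.2.2), (b * t.1, n + t.2.1, t.2.2)]).map
        (tmv Q φ)).sum := by
  induction L with
  | nil => simp
  | cons x t ih =>
    simp only [List.map_cons, List.sum_cons, Matrix.mulVec_add, smul_add, List.flatMap_cons,
      List.map_append, List.sum_append, ← ih, List.map_cons, List.map_nil, List.sum_cons,
      List.sum_nil, add_zero]
    have hterm : a • (Q ^ n *ᵥ (Matrix.diagonal φ *ᵥ tmv Q φ x)) + b • (Q ^ n *ᵥ tmv Q φ x)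
        = tmv Q φ (a * x.1, n, x.2.1 :: x.2.2) + tmv Q φ (b * x.1, n + x.2.1, x.2.2) := by
      simp only [tmv, Matrix.mulVec_smul, wv_cons, smul_smul, Matrix.mulVec_mulVec, ← pow_add]
    rw [← hterm]
    abel

lemma step_eval (Q : Mat3) (φ : Fin 3 → ℝ) (hQ : Q *ᵥ eV = eV) (n : ℕ) (a b : ℝ) (R : Rep) :
    (Q ^ n * (a • Matrix.diagonal φ + b • 1)) *ᵥ evalRep Q φ R
      = evalRep Q φ (stepRep n a b R) := by
  rw [evalRep, Matrix.mulVec_add, FmulVec, FmulVec]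
  simp only [Matrix.mulVec_smul, smul_smul, pow_mulVec_eV Q hQ n, sum_part]
  simp only [evalRep, stepRep, List.map_cons, List.sum_cons]
  have : (a * R.1) • (Q ^ n *ᵥ (Matrix.diagonal φ *ᵥ eV))
      = tmv Q φ (a * R.1, n, []) := by
    simp only [tmv, wv_nil]
  rw [this]
  abel

lemma prodL_mulVec (Q : Mat3) (φ : Fin 3 → ℝ) (hQ : Q *ᵥ eV = eV) (l : List (ℕ × ℝ × ℝ)) :
    prodL Q φ l *ᵥ eV = evalRep Q φ (buildRep l) := by
  induction l with
  | nil => simp [prodL, evalRep, buildRep]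
  | cons x t ih =>
    have h1 : prodL Q φ (x :: t) *ᵥ eV
        = (Q ^ x.1 * (x.2.1 • Matrix.diagonal φ + x.2.2 • 1)) *ᵥ (prodL Q φ t *ᵥ eV) := by
      simp only [prodL, List.map_cons, List.prod_cons, Matrix.mulVec_mulVec]
    rw [h1, ih, step_eval Q φ hQ, buildRep]

lemma dot_list_sum (μ : Fin 3 → ℝ) (L : List (Fin 3 → ℝ)) :
    μ ⬝ᵥ L.sum = (L.map (μ ⬝ᵥ ·)).sum := by
  induction L with
  | nil => simp
  | cons x t ih => simp [dotProduct_add, ih]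

lemma vecMul_pow (μ : Fin 3 → ℝ) (Q : Mat3) (hμ : μ ᵥ* Q = μ) (n : ℕ) : μ ᵥ* Q ^ n = μ := by
  induction n with
  | zero => simp
  | succ k ih => rw [pow_succ, ← Matrix.vecMul_vecMul, ih, hμ]

lemma dot_evalRep (Q : Mat3) (φ μ : Fin 3 → ℝ) (hμ : μ ᵥ* Q = μ) (hμ1 : μ ⬝ᵥ eV = 1)
    (R : Rep) :
    μ ⬝ᵥ evalRep Q φ R = R.1 + (R.2.map fun t => t.1 * hval Q φ μ t.2.2).sum := by
  rw [evalRep, dotProduct_add, dotProduct_smul, hμ1, smul_eq_mul, mul_one, dot_list_sum,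
    List.map_map]
  congr 1
  apply congrArg List.sum
  apply List.map_congr_left
  intro t _
  simp only [Function.comp, tmv, dotProduct_smul, smul_eq_mul, hval,
    Matrix.dotProduct_mulVec, vecMul_pow μ Q hμ]

/-- main scalar expansion -/
lemma scalar_expansion (Q : Mat3) (φ μ : Fin 3 → ℝ) (hQ : Q *ᵥ eV = eV)
    (hμ : μ ᵥ* Q = μ) (hμ1 : μ ⬝ᵥ eV = 1) (l : List (ℕ × ℝ × ℝ)) :
    μ ᵥ* prodL Q φ l ⬝ᵥ eV
      = (buildRep l).1 + ((buildRep l).2.map fun t => t.1 * hval Q φ μ t.2.2).sum := by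
  rw [← Matrix.dotProduct_mulVec, prodL_mulVec Q φ hQ, dot_evalRep Q φ μ hμ hμ1]

def GoodRep (R : Rep) : Prop := ∀ t ∈ R.2, 1 ≤ t.2.1 ∧ ∀ m ∈ t.2.2, 1 ≤ m

lemma goodRep_step {R : Rep} (hR : GoodRep R) {n : ℕ} (hn : 1 ≤ n) (a b : ℝ) :
    GoodRep (stepRep n a b R) := by
  intro t ht
  simp only [stepRep, List.mem_cons, List.mem_flatMap] at ht
  rcases ht with h | ⟨u, hu, h⟩
  · subst h; exact ⟨hn, by simp⟩
  · obtain ⟨h1, h2⟩ := hR u hu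
    simp only [List.mem_cons, List.mem_singleton, List.not_mem_nil, or_false] at h
    rcases h with h | h <;> subst h
    · refine ⟨hn, fun m hm => ?_⟩
      rcases List.mem_cons.1 hm with h | h
      · exact h ▸ h1
      · exact h2 m h
    · exact ⟨le_trans hn (Nat.le_add_right n _), h2⟩

lemma goodRep_build {l : List (ℕ × ℝ × ℝ)} (hl : ∀ x ∈ l, 1 ≤ x.1) :
    GoodRep (buildRep l) := by
  induction l with
  | nil => intro t ht; simp [buildRep] at ht
  | cons x t ih =>
    exact goodRep_step (ih fun y hy => hl y (List.mem_cons_of_mem x hy))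
      (hl x List.mem_cons_self) _ _

/-- The key comparison: if `hval` agrees for `P` and `Q` on all positive gap lists,
then the full scalar words agree. -/
lemma scalar_eq_of_hval_eq (P Q : Mat3) (φ μ : Fin 3 → ℝ)
    (hP : P *ᵥ eV = eV) (hQ : Q *ᵥ eV = eV)
    (hμP : μ ᵥ* P = μ) (hμQ : μ ᵥ* Q = μ) (hμ1 : μ ⬝ᵥ eV = 1)
    (hh : ∀ g : List ℕ, (∀ m ∈ g, 1 ≤ m) → hval P φ μ g = hval Q φ μ g)
    (a b : ℝ) (l : List (ℕ × ℝ × ℝ)) (hl : ∀ x ∈ l, 1 ≤ x.1) :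
    μ ᵥ* prodL P φ ((0, a, b) :: l) ⬝ᵥ eV = μ ᵥ* prodL Q φ ((0, a, b) :: l) ⬝ᵥ eV := by
  rw [scalar_expansion P φ μ hP hμP hμ1, scalar_expansion Q φ μ hQ hμQ hμ1]
  congr 1
  apply congrArg List.sum
  apply List.map_congr_left
  intro t ht
  have hgood : ∀ m ∈ t.2.2, 1 ≤ m := by
    have hG : GoodRep (buildRep l) := goodRep_build hl
    have : t ∈ (buildRep ((0, a, b) :: l)).2 := ht
    simp only [buildRep, stepRep, List.mem_cons, List.mem_flatMap] at this
    rcases this with h | ⟨u, hu, h⟩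
    · subst h; simp
    · obtain ⟨h1, h2⟩ := hG u hu
      simp only [List.mem_cons, List.mem_singleton, List.not_mem_nil, or_false] at h
      rcases h with h | h <;> subst h
      · intro m hm; rcases List.mem_cons.1 hm with h | h
        · exact h ▸ h1
        · exact h2 m h
      · exact h2
  rw [hh t.2.2 hgood]

/-- time-reversal conjugation `M ↦ D⁻¹ Mᵀ D` with `D = diag μ`. -/
noncomputable def Tr (μ : Fin 3 → ℝ) (M : Mat3) : Mat3 :=
  Matrix.diagonal (fun i => (μ i)⁻¹) * Mᵀ * Matrix.diagonal μ

lemma DinvD {μ : Fin 3 → ℝ} (hpos : ∀ i, 0 < μ i) :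
    Matrix.diagonal (fun i => (μ i)⁻¹) * Matrix.diagonal μ = (1 : Mat3) := by
  rw [Matrix.diagonal_mul_diagonal]
  rw [show (fun i : Fin 3 => (μ i)⁻¹ * μ i) = fun _ => (1:ℝ) from funext fun i =>
    inv_mul_cancel₀ (ne_of_gt (hpos i))]
  exact Matrix.diagonal_one

lemma DDinv {μ : Fin 3 → ℝ} (hpos : ∀ i, 0 < μ i) :
    Matrix.diagonal μ * Matrix.diagonal (fun i => (μ i)⁻¹) = (1 : Mat3) := by
  rw [Matrix.diagonal_mul_diagonal]
  rw [show (fun i : Fin 3 => μ i * (μ i)⁻¹) = fun _ => (1:ℝ) from funext fun i =>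
    mul_inv_cancel₀ (ne_of_gt (hpos i))]
  exact Matrix.diagonal_one

lemma Tr_mul {μ : Fin 3 → ℝ} (hpos : ∀ i, 0 < μ i) (A B : Mat3) :
    Tr μ (A * B) = Tr μ B * Tr μ A := by
  simp only [Tr, Matrix.transpose_mul, Matrix.mul_assoc]
  rw [← Matrix.mul_assoc (Matrix.diagonal μ) (Matrix.diagonal fun i => (μ i)⁻¹)
    (Aᵀ * Matrix.diagonal μ), DDinv hpos, Matrix.one_mul]

lemma Tr_one {μ : Fin 3 → ℝ} (hpos : ∀ i, 0 < μ i) : Tr μ (1 : Mat3) = 1 := by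
  simp only [Tr, Matrix.transpose_one, Matrix.mul_one, DinvD hpos]

lemma Tr_diag {μ : Fin 3 → ℝ} (hpos : ∀ i, 0 < μ i) (f : Fin 3 → ℝ) :
    Tr μ (Matrix.diagonal f) = Matrix.diagonal f := by
  simp only [Tr, Matrix.diagonal_transpose, Matrix.diagonal_mul_diagonal]
  apply congrArg Matrix.diagonal
  funext i
  rw [mul_comm ((μ i)⁻¹) (f i), mul_assoc, inv_mul_cancel₀ (ne_of_gt (hpos i)), mul_one]

lemma Tr_pow {μ : Fin 3 → ℝ} (hpos : ∀ i, 0 < μ i) (M : Mat3) (k : ℕ) :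
    Tr μ (M ^ k) = Tr μ M ^ k := by
  induction k with
  | zero => simpa using Tr_one hpos
  | succ m ih => rw [pow_succ, Tr_mul hpos, ih, pow_succ']

lemma Tr_list_prod {μ : Fin 3 → ℝ} (hpos : ∀ i, 0 < μ i) {α : Type*} (f : α → Mat3)
    (l : List α) :
    Tr μ (l.map f).prod = (l.reverse.map fun x => Tr μ (f x)).prod := by
  induction l with
  | nil => simpa using Tr_one hpos
  | cons x t ih =>
    rw [List.map_cons, List.prod_cons, Tr_mul hpos, ih, List.reverse_cons, List.map_append,
      List.prod_append, List.map_singleton, List.prod_singleton]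

lemma scalar_Tr {μ : Fin 3 → ℝ} (hpos : ∀ i, 0 < μ i) (M : Mat3) :
    μ ᵥ* Tr μ M ⬝ᵥ eV = μ ᵥ* M ⬝ᵥ eV := by
  simp only [Tr]
  rw [← Matrix.vecMul_vecMul, ← Matrix.vecMul_vecMul]
  have h1 : μ ᵥ* Matrix.diagonal (fun i => (μ i)⁻¹) = eV := by
    funext i
    rw [Matrix.vecMul_diagonal]
    exact mul_inv_cancel₀ (ne_of_gt (hpos i))
  rw [h1, Matrix.vecMul_transpose]
  have h2 : ∀ v : Fin 3 → ℝ, (v ᵥ* Matrix.diagonal μ) ⬝ᵥ eV = μ ⬝ᵥ v := by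
    intro v
    simp only [dotProduct, Matrix.vecMul_diagonal, eV]
    exact Finset.sum_congr rfl fun i _ => by ring
  rw [h2, Matrix.dotProduct_mulVec]

lemma shift_list (A : ℕ → Mat3) (L : Mat3) (g : List ℕ) :
    L * (g.map fun m => A m * L).prod = (g.map fun m => L * A m).prod * L := by
  induction g with
  | nil => simp
  | cons m t ih =>
    simp only [List.map_cons, List.prod_cons]
    rw [← Matrix.mul_assoc, ← Matrix.mul_assoc, Matrix.mul_assoc (L * A m), ih,
      ← Matrix.mul_assoc]

lemma hval_eq_scalar (Q : Mat3) (φ μ : Fin 3 → ℝ) (g : List ℕ) :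
    hval Q φ μ g
      = μ ᵥ* (Matrix.diagonal φ * (g.map fun m => Q ^ m * Matrix.diagonal φ).prod) ⬝ᵥ eV := by
  rw [hval, wv, Matrix.dotProduct_mulVec, Matrix.dotProduct_mulVec, Matrix.vecMul_vecMul]

lemma hval_Tr {μ : Fin 3 → ℝ} (hpos : ∀ i, 0 < μ i) (P : Mat3) (φ : Fin 3 → ℝ) (g : List ℕ) :
    hval (Tr μ P) φ μ g = hval P φ μ g.reverse := by
  have key : Matrix.diagonal φ * (g.map fun m => (Tr μ P) ^ m * Matrix.diagonal φ).prod
      = Tr μ (Matrix.diagonal φ * (g.reverse.map fun m => P ^ m * Matrix.diagonal φ).prod) := by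
    rw [Tr_mul hpos, Tr_diag hpos, Tr_list_prod hpos, List.reverse_reverse]
    have : (fun m => Tr μ (P ^ m * Matrix.diagonal φ))
        = fun m => Matrix.diagonal φ * (Tr μ P) ^ m := by
      funext m
      rw [Tr_mul hpos, Tr_diag hpos, Tr_pow hpos]
    rw [this, ← shift_list (fun m => (Tr μ P) ^ m) (Matrix.diagonal φ) g]
  rw [hval_eq_scalar, hval_eq_scalar, key, scalar_Tr hpos]

lemma shift_ofFn (r : ℕ) (A : Fin r → Mat3) (Dg : Fin (r + 1) → Mat3) :
    Dg 0 * (List.ofFn fun i => A i * Dg i.succ).prod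
      = (List.ofFn fun i => Dg i.castSucc * A i).prod * Dg (Fin.last r) := by
  induction r with
  | zero => simp [Fin.last]
  | succ m ih =>
    rw [List.ofFn_succ, List.ofFn_succ (f := fun i => Dg i.castSucc * A i)]
    simp only [List.prod_cons]
    have ih' := ih (fun i => A i.succ) (fun j => Dg j.succ)
    simp only [Fin.succ_castSucc, Fin.succ_last] at ih'
    rw [← Matrix.mul_assoc, ← Matrix.mul_assoc, Matrix.mul_assoc (Dg 0 * A 0)]
    rw [ih']
    simp [Matrix.mul_assoc]

lemma ofFn_comp_rev {α : Type*} {r : ℕ} (f : Fin r → α) :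
    (List.ofFn fun i => f i.rev) = (List.ofFn f).reverse := by
  induction r with
  | zero => simp
  | succ m ih =>
    rw [List.ofFn_succ (f := fun i => f i.rev), List.ofFn_succ' f, List.concat_eq_append,
      List.reverse_append]
    simp only [Fin.rev_zero, Fin.rev_succ, List.reverse_singleton, List.singleton_append]
    rw [ih (fun i => f i.castSucc)]

lemma Tr_prod {μ : Fin 3 → ℝ} (hpos : ∀ i, 0 < μ i) (l : List Mat3) :
    Tr μ l.prod = (l.reverse.map (Tr μ)).prod := by
  induction l with
  | nil => simpa using Tr_one hpos
  | cons x t ih =>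
    rw [List.prod_cons, Tr_mul hpos, ih, List.reverse_cons, List.map_append,
      List.prod_append, List.map_singleton, List.prod_singleton]

lemma obsProd_Tr {μ : Fin 3 → ℝ} (hpos : ∀ i, 0 < μ i) (P : Mat3) {K : ℕ}
    (E : Matrix (Fin 3) (Fin K) ℝ) {r : ℕ} (s : Fin (r + 1) → Fin K) (n : Fin r → ℕ) :
    Tr μ (obsProdD P E s n) = obsProdD (Tr μ P) E (s ∘ Fin.rev) (n ∘ Fin.rev) := by
  rw [obsProdD, Tr_mul hpos, Tr_diag hpos, Tr_prod hpos, ← ofFn_comp_rev, List.map_ofFn]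
  rw [obsProdD, shift_ofFn r (fun i => (Tr μ P) ^ (n ∘ Fin.rev) i)
    (fun j => Matrix.diagonal fun a => E a ((s ∘ Fin.rev) j))]
  congr 1
  · apply congrArg List.prod
    apply congrArg List.ofFn
    funext i
    simp only [Function.comp_apply, Fin.rev_castSucc]
    rw [Tr_mul hpos, Tr_diag hpos, Tr_pow hpos]
  · simp [Function.comp, Fin.rev_last]

lemma obs_scalar_rev {μ : Fin 3 → ℝ} (hpos : ∀ i, 0 < μ i) (P : Mat3) {K : ℕ}
    (E : Matrix (Fin 3) (Fin K) ℝ) {r : ℕ} (s : Fin (r + 1) → Fin K) (n : Fin r → ℕ) :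
    μ ᵥ* obsProdD P E (s ∘ Fin.rev) (n ∘ Fin.rev) ⬝ᵥ eV
      = μ ᵥ* obsProdD (Tr μ P) E s n ⬝ᵥ eV := by
  rw [← scalar_Tr hpos (obsProdD P E (s ∘ Fin.rev) (n ∘ Fin.rev)),
    obsProd_Tr hpos P E (s ∘ Fin.rev) (n ∘ Fin.rev)]
  have h1 : (s ∘ Fin.rev) ∘ Fin.rev = s := by funext i; simp [Function.comp]
  have h2 : (n ∘ Fin.rev) ∘ Fin.rev = n := by funext i; simp [Function.comp]
  rw [h1, h2]

lemma obsProdD_eq_prodL (Q : Mat3) {K : ℕ} (E : Matrix (Fin 3) (Fin K) ℝ)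
    (φ : Fin 3 → ℝ) {r : ℕ} (s : Fin (r + 1) → Fin K) (n : Fin r → ℕ)
    (a b : Fin (r + 1) → ℝ)
    (hd : ∀ j, (Matrix.diagonal fun x => E x (s j))
      = a j • Matrix.diagonal φ + b j • 1) :
    obsProdD Q E s n
      = prodL Q φ ((0, a 0, b 0) :: List.ofFn fun i => (n i, a i.succ, b i.succ)) := by
  rw [prodL, List.map_cons, List.prod_cons, pow_zero, one_mul, ← hd 0, List.map_ofFn,
    obsProdD]
  congr 1
  apply congrArg List.prod
  apply congrArg List.ofFn
  funext i
  simp only [Function.comp_apply]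
  rw [hd i.succ]

lemma hval_rev_of_single {P : Mat3} {φ μ : Fin 3 → ℝ}
    (Hss : ∀ (r : ℕ), 1 ≤ r → ∀ n : Fin r → ℕ, (∀ i, 1 ≤ n i) →
      (μ ᵥ* (Matrix.diagonal φ *
          (List.ofFn fun i : Fin r => P ^ n i * Matrix.diagonal φ).prod))
        ⬝ᵥ (fun _ => (1 : ℝ)) =
      (μ ᵥ* (Matrix.diagonal φ *
          (List.ofFn fun i : Fin r =>
            P ^ (n ∘ Fin.rev) i * Matrix.diagonal φ).prod))
        ⬝ᵥ (fun _ => (1 : ℝ)))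
    (g : List ℕ) (hg : ∀ m ∈ g, 1 ≤ m) :
    hval P φ μ g = hval P φ μ g.reverse := by
  by_cases hnil : g = []
  · subst hnil; simp
  have hlen : 1 ≤ g.length := List.length_pos_iff.mpr hnil
  have hpos' : ∀ i : Fin g.length, 1 ≤ g.get i := fun i => hg _ (List.get_mem g i)
  have key := Hss g.length hlen (fun i => g.get i) hpos'
  have conv1 : (List.ofFn fun i => P ^ g.get i * Matrix.diagonal φ)
      = g.map fun m => P ^ m * Matrix.diagonal φ := by
    rw [show (fun i : Fin g.length => P ^ g.get i * Matrix.diagonal φ)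
        = (fun m => P ^ m * Matrix.diagonal φ) ∘ g.get from rfl, ← List.map_ofFn,
      List.ofFn_get]
  have conv2 : (List.ofFn fun i => P ^ ((fun i => g.get i) ∘ Fin.rev) i * Matrix.diagonal φ)
      = g.reverse.map fun m => P ^ m * Matrix.diagonal φ := by
    have : (List.ofFn fun i => P ^ ((fun i => g.get i) ∘ Fin.rev) i * Matrix.diagonal φ)
        = List.ofFn fun i => (fun j => P ^ g.get j * Matrix.diagonal φ) i.rev := rfl
    rw [this, ofFn_comp_rev (fun j => P ^ g.get j * Matrix.diagonal φ), conv1,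
      List.map_reverse]
  rw [conv1, conv2] at key
  rw [hval_eq_scalar, hval_eq_scalar]
  exact key

lemma eV_eq : (fun _ : Fin 3 => (1 : ℝ)) = eV := rfl

end HMMaux

open HMMaux

/-- If the rank of the state-dependent probability matrix is 2 and
`φ` is a column of it such that every column is a linear combination of `φ` and
`e = (1,1,1)ᵀ`, then, with `Λ = diag(φ)`, the observed process is reversible if and
only if `μ·Λ·P^{n₁}·Λ·⋯·Λ·P^{n_r}·Λ·e = μ·Λ·P^{n_r}·Λ·⋯·Λ·P^{n₁}·Λ·e` for all `r ≥ 1`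
and all positive integers `n₁, …, n_r`. -/
theorem reversible_iff_single_symbol
    (P : Matrix (Fin 3) (Fin 3) ℝ) (μ : Fin 3 → ℝ)
    {K : ℕ} (E : Matrix (Fin 3) (Fin K) ℝ) (φ : Fin 3 → ℝ)
    (hP0 : ∀ i j : Fin 3, 0 ≤ P i j)
    (hP1 : ∀ i : Fin 3, ∑ j, P i j = 1)
    (hpos : ∀ i, 0 < μ i) (hsum : μ 0 + μ 1 + μ 2 = 1)
    (hstat : μ ᵥ* P = μ)
    (hE0 : ∀ a k, 0 ≤ E a k) (hE1 : ∀ a : Fin 3, ∑ k, E a k = 1)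
    (hrank : E.rank = 2)
    (hφ : ∃ k : Fin K, φ = fun a => E a k)
    (hcomb : ∀ k : Fin K, ∃ a b : ℝ,
      (fun i => E i k) = a • φ + b • (fun _ => (1 : ℝ))) :
    (∀ (r : ℕ) (s : Fin (r + 1) → Fin K) (n : Fin r → ℕ), (∀ i, 1 ≤ n i) →
        (μ ᵥ* obsProdD P E s n) ⬝ᵥ (fun _ => (1 : ℝ)) =
          (μ ᵥ* obsProdD P E (s ∘ Fin.rev) (n ∘ Fin.rev)) ⬝ᵥ (fun _ => (1 : ℝ)))
      ↔ (∀ (r : ℕ), 1 ≤ r → ∀ n : Fin r → ℕ, (∀ i, 1 ≤ n i) →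
          (μ ᵥ* (Matrix.diagonal φ *
              (List.ofFn fun i : Fin r => P ^ n i * Matrix.diagonal φ).prod))
            ⬝ᵥ (fun _ => (1 : ℝ)) =
          (μ ᵥ* (Matrix.diagonal φ *
              (List.ofFn fun i : Fin r =>
                P ^ (n ∘ Fin.rev) i * Matrix.diagonal φ).prod))
            ⬝ᵥ (fun _ => (1 : ℝ))) := by
  have heV : μ ⬝ᵥ eV = 1 := by
    simp [dotProduct, eV, Fin.sum_univ_three, hsum]
  have hPe : P *ᵥ eV = eV := by
    funext i
    simp only [Matrix.mulVec, dotProduct, eV, mul_one]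
    exact hP1 i
  constructor
  · -- reversibility → single-symbol condition
    intro H r hr n hn
    obtain ⟨k, hk⟩ := hφ
    have key := H r (fun _ => k) n hn
    have hobs1 : obsProdD P E (fun _ => k) n
        = Matrix.diagonal φ * (List.ofFn fun i : Fin r => P ^ n i * Matrix.diagonal φ).prod := by
      simp only [obsProdD, ← hk]
    have hobs2 : obsProdD P E ((fun _ : Fin (r+1) => k) ∘ Fin.rev) (n ∘ Fin.rev)
        = Matrix.diagonal φ *
            (List.ofFn fun i : Fin r => P ^ (n ∘ Fin.rev) i * Matrix.diagonal φ).prod := by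
      simp only [obsProdD, Function.comp_apply, ← hk]
    rw [hobs1, hobs2] at key
    exact key
  · -- single-symbol condition → reversibility
    intro Hss r s n hn
    set Q := Tr μ P with hQdef
    have hQe : Q *ᵥ eV = eV := by
      rw [hQdef, Tr, ← Matrix.mulVec_mulVec, ← Matrix.mulVec_mulVec]
      have h1 : Matrix.diagonal μ *ᵥ eV = μ := by
        funext i; simp [Matrix.mulVec_diagonal, eV]
      have h2 : Pᵀ *ᵥ μ = μ := by rw [Matrix.mulVec_transpose, hstat]
      rw [h1, h2]
      funext i
      simp only [Matrix.mulVec_diagonal, eV]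
      exact inv_mul_cancel₀ (ne_of_gt (hpos i))
    have hμQ : μ ᵥ* Q = μ := by
      rw [hQdef, Tr, ← Matrix.vecMul_vecMul, ← Matrix.vecMul_vecMul]
      have h1 : μ ᵥ* Matrix.diagonal (fun i => (μ i)⁻¹) = eV := by
        funext i
        rw [Matrix.vecMul_diagonal]
        exact mul_inv_cancel₀ (ne_of_gt (hpos i))
      have h2 : eV ᵥ* Pᵀ = eV := by rw [Matrix.vecMul_transpose, hPe]
      rw [h1, h2]
      funext i
      simp [Matrix.vecMul_diagonal, eV]
    -- coefficients
    have hcoef : ∀ j : Fin (r+1), ∃ ab : ℝ × ℝ,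
        (Matrix.diagonal fun x => E x (s j))
          = ab.1 • Matrix.diagonal φ + ab.2 • 1 := by
      intro j
      obtain ⟨a, b, hab⟩ := hcomb (s j)
      refine ⟨(a, b), ?_⟩
      have : (fun x => E x (s j)) = a • φ + b • (fun _ => (1:ℝ)) := hab
      rw [this]
      simp only [← Matrix.diagonal_one, ← Matrix.diagonal_smul, ← Matrix.diagonal_add]
      ext i j
      by_cases hij : i = j <;> simp [Matrix.diagonal, hij]
    choose ab hab using hcoef
    set a : Fin (r+1) → ℝ := fun j => (ab j).1
    set b : Fin (r+1) → ℝ := fun j => (ab j).2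
    have hh : ∀ g : List ℕ, (∀ m ∈ g, 1 ≤ m) → hval P φ μ g = hval Q φ μ g := by
      intro g hg
      rw [hQdef, hval_Tr hpos]
      exact hval_rev_of_single Hss g hg
    have hlpos : ∀ x ∈ (List.ofFn fun i => (n i, a i.succ, b i.succ)), 1 ≤ x.1 := by
      intro x hx
      rw [List.mem_ofFn] at hx
      obtain ⟨i, rfl⟩ := hx
      exact hn i
    have key := scalar_eq_of_hval_eq P Q φ μ hPe hQe hstat hμQ heV hh (a 0) (b 0)
      (List.ofFn fun i => (n i, a i.succ, b i.succ)) hlpos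
    rw [← obsProdD_eq_prodL P E φ s n a b hab, ← obsProdD_eq_prodL Q E φ s n a b hab] at key
    have final := obs_scalar_rev hpos P E s n
    rw [eV_eq]
    rw [final, ← hQdef]
    exact key
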